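/- Let K, T, B > 0. There is a constant β depending only on K, T, B with the following property. Let C : ℝ → ℝ³ be a C⁴ curve parametrized by arclength with C(0) = 0, |C''| ≤ K, |C'''| ≤ T, |C⁗| ≤ B, and let 0 ≤ s ≤ s₁. Then | C'(s) · (C'(0) × C'(s₁)) | ≤ (K·T/2)·s₁³ + β·s₁⁴; that is, the unnormalized height of the tantrix point C'(s) above the plane spanned by C'(0) and C'(s₁) is bounded by (K·T/2)·s₁³ to leading order. -/

import Mathlib

noncomputable section

set_option maxHeartbeats 1000000

open Set

/-- Cross product on `ℝ³`. -/
def cross3 (v w : EuclideanSpace ℝ (Fin 3)) : EuclideanSpace ℝ (Fin 3) :=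
  WithLp.toLp 2 ![v 1 * w 2 - v 2 * w 1, v 2 * w 0 - v 0 * w 2, v 0 * w 1 - v 1 * w 0]

/-- Euclidean inner product on `ℝ³`. -/
def dot3 (v w : EuclideanSpace ℝ (Fin 3)) : ℝ := inner ℝ v w

lemma triple_expand (u v w : EuclideanSpace ℝ (Fin 3)) :
    dot3 u (cross3 v w) =
      u 0 * (v 1 * w 2 - v 2 * w 1) + u 1 * (v 2 * w 0 - v 0 * w 2)
        + u 2 * (v 0 * w 1 - v 1 * w 0) := by
  simp [dot3, cross3, PiLp.inner_apply, RCLike.inner_apply, starRingEnd_apply,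
    Fin.sum_univ_three]
  ring

lemma norm_sq3 (x : EuclideanSpace ℝ (Fin 3)) : ‖x‖ ^ 2 = x 0 ^ 2 + x 1 ^ 2 + x 2 ^ 2 := by
  rw [EuclideanSpace.norm_eq, Real.sq_sqrt (by positivity)]
  simp [Fin.sum_univ_three, sq_abs]

lemma abs_triple_le (u v w : EuclideanSpace ℝ (Fin 3)) :
    |dot3 u (cross3 v w)| ≤ ‖u‖ * ‖v‖ * ‖w‖ := by
  have h1 : |dot3 u (cross3 v w)| ≤ ‖u‖ * ‖cross3 v w‖ := abs_real_inner_le_norm u _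
  have h2 : ‖cross3 v w‖ ≤ ‖v‖ * ‖w‖ := by
    have hnn : (0:ℝ) ≤ ‖v‖ * ‖w‖ := by positivity
    have hsq : ‖cross3 v w‖ ^ 2 ≤ (‖v‖ * ‖w‖) ^ 2 := by
      rw [mul_pow, norm_sq3, norm_sq3, norm_sq3]
      have e0 : (cross3 v w) 0 = v 1 * w 2 - v 2 * w 1 := rfl
      have e1 : (cross3 v w) 1 = v 2 * w 0 - v 0 * w 2 := rfl
      have e2 : (cross3 v w) 2 = v 0 * w 1 - v 1 * w 0 := rfl
      rw [e0, e1, e2]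
      nlinarith [sq_nonneg (v 0 * w 0 + v 1 * w 1 + v 2 * w 2)]
    calc ‖cross3 v w‖ = √(‖cross3 v w‖ ^ 2) := (Real.sqrt_sq (norm_nonneg _)).symm
      _ ≤ √((‖v‖ * ‖w‖) ^ 2) := Real.sqrt_le_sqrt hsq
      _ = ‖v‖ * ‖w‖ := Real.sqrt_sq hnn
  calc |dot3 u (cross3 v w)| ≤ ‖u‖ * ‖cross3 v w‖ := h1
    _ ≤ ‖u‖ * (‖v‖ * ‖w‖) := by gcongr
    _ = ‖u‖ * ‖v‖ * ‖w‖ := by ring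

lemma key_identity (x y a a' a'' : EuclideanSpace ℝ (Fin 3)) (s s₁ p q : ℝ) :
    dot3 x (cross3 a y) =
      (s * q - p * s₁) * dot3 a' (cross3 a a'') +
      s * dot3 a' (cross3 a (y - a - s₁ • a' - q • a'')) +
      p * dot3 a'' (cross3 a (y - a - s₁ • a' - q • a'')) +
      dot3 (x - a - s • a' - p • a'') (cross3 a (y - a)) := by
  simp only [triple_expand, PiLp.sub_apply, PiLp.smul_apply, smul_eq_mul]
  ring

lemma iteratedDerivWithin_eq_iteratedDeriv' {E : Type*} [NormedAddCommGroup E]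
    [NormedSpace ℝ E] {f : ℝ → E} {n : ℕ} (hf : ContDiff ℝ n f) {s : Set ℝ}
    (hs : UniqueDiffOn ℝ s) {x : ℝ} (hx : x ∈ s) :
    iteratedDerivWithin n f s x = iteratedDeriv n f x := by
  have h := (contDiff_iff_ftaylorSeries.mp (hf.of_le (le_refl _))).hasFTaylorSeriesUpToOn s
  have h2 := h.eq_iteratedFDerivWithin_of_uniqueDiffOn (le_refl _) hs hx
  simp only [iteratedDerivWithin, iteratedDeriv, ← h2]
  rfl

/-- There is a constant `β = β(K,T,B)` such that for any unit-speed `C⁴`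
curve `C` with `C 0 = 0`, `|C''| ≤ K`, `|C'''| ≤ T`, `|C⁗| ≤ B`, and any `0 ≤ s ≤ s₁`,
`|C'(s)·(C'(0) × C'(s₁))| ≤ (K·T/2)·s₁³ + β·s₁⁴`: the unnormalized height of the tantrix
point `C'(s)` above the plane spanned by `C'(0)` and `C'(s₁)` is bounded by `(K·T/2)·s₁³`
to leading order. -/
theorem tantrix_height_above_tangent_plane (K T B : ℝ) (hK : 0 < K) (hT : 0 < T) (hB : 0 < B) :
    ∃ β : ℝ, ∀ (C : ℝ → EuclideanSpace ℝ (Fin 3)) (s s₁ : ℝ),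
      ContDiff ℝ 4 C → C 0 = 0 →
      (∀ u : ℝ, ‖deriv C u‖ = 1) →
      (∀ u : ℝ, ‖iteratedDeriv 2 C u‖ ≤ K) →
      (∀ u : ℝ, ‖iteratedDeriv 3 C u‖ ≤ T) →
      (∀ u : ℝ, ‖iteratedDeriv 4 C u‖ ≤ B) →
      0 ≤ s → s ≤ s₁ →
      |dot3 (deriv C s) (cross3 (deriv C 0) (deriv C s₁))| ≤
        K * T / 2 * s₁ ^ 3 + β * s₁ ^ 4 := by
  refine ⟨1 + K * B / 2 + T * B / 4 + B * K / 2, ?_⟩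
  intro C s s₁ hC _hC0 hunit h2K h3T h4B hs hss
  have hs₁ : 0 ≤ s₁ := hs.trans hss
  set f : ℝ → EuclideanSpace ℝ (Fin 3) := deriv C with hfdef
  have hC' : ContDiff ℝ ((3:ℕ) + 1) C := by exact_mod_cast hC
  have hf3 : ContDiff ℝ (3:ℕ) f := (contDiff_succ_iff_deriv.mp hC').2.2
  -- iterated derivatives of f in terms of C
  have hd1 : iteratedDeriv 1 f = iteratedDeriv 2 C := (iteratedDeriv_succ' (n := 1)).symm
  have hd2 : iteratedDeriv 2 f = iteratedDeriv 3 C := (iteratedDeriv_succ' (n := 2)).symm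
  have hd3 : iteratedDeriv 3 f = iteratedDeriv 4 C := (iteratedDeriv_succ' (n := 3)).symm
  rcases eq_or_lt_of_le hs₁ with h0 | h0
  · -- s₁ = 0, hence s = 0
    have hs0 : s = 0 := le_antisymm (h0 ▸ hss) hs
    subst hs0
    rw [← h0]
    have : dot3 (f 0) (cross3 (f 0) (f 0)) = 0 := by rw [triple_expand]; ring
    rw [this]
    norm_num
  rcases le_or_gt s₁ 1 with h1 | h1
  · -- main case : 0 < s₁ ≤ 1
    set a := f 0 with hadef
    set a' := iteratedDeriv 1 f 0 with ha'def
    set a'' := iteratedDeriv 2 f 0 with ha''def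
    have huniq : UniqueDiffOn ℝ (Icc (0:ℝ) s₁) := uniqueDiffOn_Icc h0
    have h0mem : (0:ℝ) ∈ Icc (0:ℝ) s₁ := ⟨le_refl _, hs₁⟩
    -- Taylor remainder bound
    have htay : ∀ x ∈ Icc (0:ℝ) s₁,
        ‖f x - (a + x • a' + (x ^ 2 / 2) • a'')‖ ≤ B * x ^ 3 / 2 := by
      intro x hx
      have hfIcc : ContDiffOn ℝ ((2:ℕ) + 1) f (Icc (0:ℝ) s₁) := by
        exact_mod_cast hf3.contDiffOn
      have hb := taylor_mean_remainder_bound (n := 2) hs₁ hfIcc hx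
        (fun y hy => by
          rw [iteratedDerivWithin_eq_iteratedDeriv' hf3 huniq hy, hd3]
          exact h4B y)
      have hpoly : taylorWithinEval f 2 (Icc (0:ℝ) s₁) 0 x
          = a + x • a' + (x ^ 2 / 2) • a'' := by
        rw [taylor_within_apply]
        simp only [Finset.sum_range_succ, Finset.sum_range_zero, zero_add]
        rw [iteratedDerivWithin_eq_iteratedDeriv' (hf3.of_le (by norm_num)) huniq h0mem,
          iteratedDerivWithin_eq_iteratedDeriv' (hf3.of_le (by norm_num)) huniq h0mem,
          iteratedDerivWithin_eq_iteratedDeriv' (hf3.of_le (by norm_num)) huniq h0mem]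
        norm_num [iteratedDeriv_zero]
        rw [show deriv f 0 = a' by rw [ha'def, iteratedDeriv_one]]
        module
      rw [hpoly] at hb
      calc ‖f x - (a + x • a' + (x ^ 2 / 2) • a'')‖
          ≤ B * (x - 0) ^ (2 + 1) / (Nat.factorial 2 : ℕ) := hb
        _ = B * x ^ 3 / 2 := by norm_num [Nat.factorial]
    -- Lipschitz bound for f
    have hlip : ‖f s₁ - a‖ ≤ K * s₁ := by
      have hdiff : Differentiable ℝ f := hf3.differentiable (by norm_num)
      have := convex_univ.norm_image_sub_le_of_norm_hasDerivWithin_le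
        (f := f) (f' := fun u => iteratedDeriv 1 f u) (s := univ)
        (fun u _ => by
          rw [iteratedDeriv_one]
          exact (hdiff u).hasDerivAt.hasDerivWithinAt)
        (fun u _ => by rw [hd1]; exact h2K u) (mem_univ 0) (mem_univ s₁)
      simpa [Real.norm_eq_abs, abs_of_nonneg hs₁] using this
    -- norms
    have hna : ‖a‖ = 1 := hunit 0
    have hna' : ‖a'‖ ≤ K := by rw [ha'def, hd1]; exact h2K 0
    have hna'' : ‖a''‖ ≤ T := by rw [ha''def, hd2]; exact h3T 0
    have hRs : ‖f s - (a + s • a' + (s ^ 2 / 2) • a'')‖ ≤ B * s ^ 3 / 2 :=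
      htay s ⟨hs, hss⟩
    have hRs₁ : ‖f s₁ - (a + s₁ • a' + (s₁ ^ 2 / 2) • a'')‖ ≤ B * s₁ ^ 3 / 2 :=
      htay s₁ ⟨hs₁, le_refl _⟩
    -- rewrite the remainder shapes
    have hresh : ∀ (x : EuclideanSpace ℝ (Fin 3)) (t : ℝ),
        x - a - t • a' - (t ^ 2 / 2) • a'' = x - (a + t • a' + (t ^ 2 / 2) • a'') := by
      intro x t; abel
    rw [key_identity (f s) (f s₁) a a' a'' s s₁ (s ^ 2 / 2) (s₁ ^ 2 / 2)]
    rw [hresh, hresh]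
    set R := f s - (a + s • a' + (s ^ 2 / 2) • a'') with hRdef
    set R₁ := f s₁ - (a + s₁ • a' + (s₁ ^ 2 / 2) • a'') with hR₁def
    -- bound each of the four terms
    have hKT0 : (0:ℝ) ≤ K * T := (mul_pos hK hT).le
    have hb1 : |(s * (s₁ ^ 2 / 2) - s ^ 2 / 2 * s₁) * dot3 a' (cross3 a a'')| ≤
        K * T / 2 * s₁ ^ 3 := by
      rw [abs_mul]
      have e1 : |s * (s₁ ^ 2 / 2) - s ^ 2 / 2 * s₁| = s * s₁ * (s₁ - s) / 2 := by
        rw [abs_of_nonneg (by nlinarith [mul_nonneg (mul_nonneg hs hs₁) (sub_nonneg.2 hss)])]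
        ring
      have e2 : |dot3 a' (cross3 a a'')| ≤ K * T := by
        have h := abs_triple_le a' a a''
        rw [hna] at h
        calc |dot3 a' (cross3 a a'')| ≤ ‖a'‖ * 1 * ‖a''‖ := h
          _ = ‖a'‖ * ‖a''‖ := by ring
          _ ≤ K * T := mul_le_mul hna' hna'' (norm_nonneg _) hK.le
      calc |s * (s₁ ^ 2 / 2) - s ^ 2 / 2 * s₁| * |dot3 a' (cross3 a a'')|
          ≤ (s * s₁ * (s₁ - s) / 2) * (K * T) := by
            rw [e1]
            exact mul_le_mul_of_nonneg_left e2
              (by nlinarith [mul_nonneg (mul_nonneg hs hs₁) (sub_nonneg.2 hss)])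
        _ ≤ K * T / 2 * s₁ ^ 3 := by
            nlinarith [mul_nonneg (mul_nonneg hKT0 hs₁) (sq_nonneg (s₁ - s)),
              mul_nonneg (mul_nonneg hKT0 hs) (sq_nonneg s₁)]
    have hb2 : |s * dot3 a' (cross3 a R₁)| ≤ K * B / 2 * s₁ ^ 4 := by
      have h := abs_triple_le a' a R₁
      rw [hna] at h
      have h' : |dot3 a' (cross3 a R₁)| ≤ K * (B * s₁ ^ 3 / 2) := by
        calc |dot3 a' (cross3 a R₁)| ≤ ‖a'‖ * 1 * ‖R₁‖ := h
          _ = ‖a'‖ * ‖R₁‖ := by ring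
          _ ≤ K * (B * s₁ ^ 3 / 2) := mul_le_mul hna' hRs₁ (norm_nonneg _) hK.le
      rw [abs_mul, abs_of_nonneg hs]
      calc s * |dot3 a' (cross3 a R₁)| ≤ s₁ * (K * (B * s₁ ^ 3 / 2)) :=
            mul_le_mul hss h' (abs_nonneg _) hs₁
        _ = K * B / 2 * s₁ ^ 4 := by ring
    have hb3 : |s ^ 2 / 2 * dot3 a'' (cross3 a R₁)| ≤ T * B / 4 * s₁ ^ 4 := by
      have h := abs_triple_le a'' a R₁
      rw [hna] at h
      have h' : |dot3 a'' (cross3 a R₁)| ≤ T * (B * s₁ ^ 3 / 2) := by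
        calc |dot3 a'' (cross3 a R₁)| ≤ ‖a''‖ * 1 * ‖R₁‖ := h
          _ = ‖a''‖ * ‖R₁‖ := by ring
          _ ≤ T * (B * s₁ ^ 3 / 2) := mul_le_mul hna'' hRs₁ (norm_nonneg _) hT.le
      rw [abs_mul, abs_of_nonneg (by positivity : (0:ℝ) ≤ s ^ 2 / 2)]
      have hcoef : s ^ 2 / 2 ≤ s₁ ^ 2 / 2 := by nlinarith
      calc s ^ 2 / 2 * |dot3 a'' (cross3 a R₁)| ≤ s₁ ^ 2 / 2 * (T * (B * s₁ ^ 3 / 2)) :=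
            mul_le_mul hcoef h' (abs_nonneg _) (by positivity)
        _ = T * B / 4 * (s₁ ^ 4 * s₁) := by ring
        _ ≤ T * B / 4 * (s₁ ^ 4 * 1) := by
            have : s₁ ^ 4 * s₁ ≤ s₁ ^ 4 * 1 :=
              mul_le_mul_of_nonneg_left h1 (pow_nonneg hs₁ 4)
            nlinarith [mul_pos hT hB]
        _ = T * B / 4 * s₁ ^ 4 := by ring
    have hb4 : |dot3 R (cross3 a (f s₁ - a))| ≤ B * K / 2 * s₁ ^ 4 := by
      have h := abs_triple_le R a (f s₁ - a)
      rw [hna] at h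
      have hs3 : s ^ 3 ≤ s₁ ^ 3 := pow_le_pow_left₀ hs hss 3
      calc |dot3 R (cross3 a (f s₁ - a))| ≤ ‖R‖ * 1 * ‖f s₁ - a‖ := h
        _ = ‖R‖ * ‖f s₁ - a‖ := by ring
        _ ≤ (B * s ^ 3 / 2) * (K * s₁) :=
            mul_le_mul hRs hlip (norm_nonneg _) (by positivity)
        _ ≤ (B * s₁ ^ 3 / 2) * (K * s₁) := by
            apply mul_le_mul_of_nonneg_right _ (by positivity)
            nlinarith
        _ = B * K / 2 * s₁ ^ 4 := by ring
    calc |(s * (s₁ ^ 2 / 2) - s ^ 2 / 2 * s₁) * dot3 a' (cross3 a a'') +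
            s * dot3 a' (cross3 a R₁) + s ^ 2 / 2 * dot3 a'' (cross3 a R₁) +
            dot3 R (cross3 a (f s₁ - a))|
        ≤ |(s * (s₁ ^ 2 / 2) - s ^ 2 / 2 * s₁) * dot3 a' (cross3 a a'')| +
          |s * dot3 a' (cross3 a R₁)| + |s ^ 2 / 2 * dot3 a'' (cross3 a R₁)| +
          |dot3 R (cross3 a (f s₁ - a))| := by
          apply (abs_add_le _ _).trans
          have h := (abs_add_le ((s * (s₁ ^ 2 / 2) - s ^ 2 / 2 * s₁) * dot3 a' (cross3 a a''))
            (s * dot3 a' (cross3 a R₁)))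
          linarith [abs_add_le ((s * (s₁ ^ 2 / 2) - s ^ 2 / 2 * s₁) * dot3 a' (cross3 a a'') +
            s * dot3 a' (cross3 a R₁)) (s ^ 2 / 2 * dot3 a'' (cross3 a R₁)), h]
      _ ≤ K * T / 2 * s₁ ^ 3 + (1 + K * B / 2 + T * B / 4 + B * K / 2) * s₁ ^ 4 := by
          have h4 : (0:ℝ) ≤ s₁ ^ 4 := pow_nonneg hs₁ 4
          linarith [hb1, hb2, hb3, hb4]
  · -- trivial case : s₁ > 1
    have htriv : |dot3 (f s) (cross3 (f 0) (f s₁))| ≤ 1 := by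
      calc |dot3 (f s) (cross3 (f 0) (f s₁))| ≤ ‖f s‖ * ‖f 0‖ * ‖f s₁‖ := abs_triple_le _ _ _
        _ = 1 := by rw [hunit, hunit, hunit]; ring
    have h4 : (1:ℝ) ≤ s₁ ^ 4 := one_le_pow₀ h1.le
    have hKT : (0:ℝ) ≤ K * T / 2 * s₁ ^ 3 := by positivity
    have hb : (1:ℝ) ≤ (1 + K * B / 2 + T * B / 4 + B * K / 2) * s₁ ^ 4 := by
      nlinarith [h4, mul_pos hK hB, mul_pos hT hB, mul_pos hB hK]
    linarith [htriv, hKT, hb]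

end
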